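/- Let a ≥ 1, b ≥ 1, and n ≥ a + b + a. The number of vertices in a longest path of S_{n,a,b} = K_a ∨ (K_b ∪ I_{n−a−b}) equals 2a + b. -/

import Mathlib

/-- The graph `S_{n,a,b} = K_a ∨ (K_b ∪ I_{n-a-b})` on `n` vertices: the first
`a` vertices form a clique joined to everything, the next `b` vertices form a
clique, and the remaining `n-a-b` vertices are independent. -/
def Snab (n a b : ℕ) : SimpleGraph (Fin n) where
  Adj x y := x ≠ y ∧
    ((x : ℕ) < a ∨ (y : ℕ) < a ∨ ((x : ℕ) < a + b ∧ (y : ℕ) < a + b))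
  symm := by
    constructor
    intro x y ⟨h1, h2⟩
    exact ⟨h1.symm, by tauto⟩
  loopless := by
    constructor
    intro x ⟨h1, _⟩
    exact h1 rfl

/-- The circumference of a graph: the length of a longest cycle
(`0` if there is no cycle). -/
noncomputable def circumference {V : Type*} (G : SimpleGraph V) : ℕ :=
  sSup {n | ∃ (u : V) (c : G.Walk u u), c.IsCycle ∧ c.length = n}

/-- The number of vertices of a longest path of `G`. -/
noncomputable def longestPathVerts {V : Type*} (G : SimpleGraph V) : ℕ :=
  sSup {n | ∃ (u v : V) (p : G.Walk u v), p.IsPath ∧ p.length + 1 = n}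

/-- vertex sequence of the witness path -/
def gfun (a b i : ℕ) : ℕ :=
  if i < 2 * a then (if i % 2 = 0 then a + b + i / 2 else i / 2) else i - a

lemma gfun_lt (n a b : ℕ) (hn : a + b + a ≤ n) (i : ℕ) (hi : i < 2 * a + b) :
    gfun a b i < n := by
  unfold gfun; split_ifs <;> omega

lemma gfun_inj (a b : ℕ) {i j : ℕ} (hi : i < 2 * a + b) (hj : j < 2 * a + b)
    (h : gfun a b i = gfun a b j) : i = j := by
  unfold gfun at h; split_ifs at h <;> omega

lemma gfun_adj (a b : ℕ) (i : ℕ) (hi : i + 1 < 2 * a + b) :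
    gfun a b i < a ∨ gfun a b (i + 1) < a ∨
      (gfun a b i < a + b ∧ gfun a b (i + 1) < a + b) := by
  unfold gfun; split_ifs <;> omega

lemma exists_walk {V : Type*} {G : SimpleGraph V} :
    ∀ (l : List V), l.Chain' G.Adj → l ≠ [] →
      ∃ (u v : V) (w : G.Walk u v), w.support = l := by
  intro l
  induction l with
  | nil => simp
  | cons x t ih =>
    intro hch _
    cases t with
    | nil => exact ⟨x, x, SimpleGraph.Walk.nil, rfl⟩
    | cons y t' =>
      obtain ⟨hadj, hch'⟩ := List.isChain_cons_cons.mp hch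
      obtain ⟨u, v, w, hw⟩ := ih hch' (by simp)
      have hu : u = y := by
        have h2 := w.support_eq_cons
        rw [hw] at h2
        exact (List.cons.injEq _ _ _ _ ▸ h2).1.symm
      subst hu
      exact ⟨x, v, SimpleGraph.Walk.cons hadj w, by simp [hw]⟩

lemma key_bound (n a b : ℕ) (hb : 1 ≤ b) (l : List (Fin n))
    (hnd : l.Nodup) (hch : l.Chain' (Snab n a b).Adj) : l.length ≤ 2 * a + b := by
  classical
  set len := l.length with hlen
  have hget : Function.Injective l.get := List.nodup_iff_injective_get.mp hnd
  have hadj : ∀ (i : ℕ) (h : i + 1 < len),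
      (Snab n a b).Adj (l.get ⟨i, by omega⟩) (l.get ⟨i + 1, h⟩) := by
    rw [List.Chain', List.isChain_iff_getElem] at hch
    exact fun i h => hch i (by omega)
  set SA : Finset (Fin len) :=
    Finset.univ.filter (fun i => ((l.get i) : ℕ) < a) with hSAdef
  set SNA : Finset (Fin len) :=
    Finset.univ.filter (fun i => ¬ ((l.get i) : ℕ) < a) with hSNAdef
  set SB : Finset (Fin len) :=
    SNA.filter (fun i => ((l.get i) : ℕ) < a + b) with hSBdef
  set SI : Finset (Fin len) :=
    SNA.filter (fun i => ¬ ((l.get i) : ℕ) < a + b) with hSIdef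
  have hsum : SA.card + SB.card + SI.card = len := by
    have h1 := Finset.card_filter_add_card_filter_not
      (s := (Finset.univ : Finset (Fin len))) (p := fun i => ((l.get i) : ℕ) < a)
    have h2 := Finset.card_filter_add_card_filter_not
      (s := SNA) (p := fun i => ((l.get i) : ℕ) < a + b)
    simp only [Finset.card_univ, Fintype.card_fin] at h1
    rw [← hSAdef, ← hSNAdef] at h1
    rw [← hSBdef, ← hSIdef] at h2
    omega
  -- membership characterizations
  have hmemSA : ∀ i, i ∈ SA ↔ ((l.get i) : ℕ) < a := by
    intro i; simp [hSAdef]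
  have hmemSB : ∀ i, i ∈ SB ↔ a ≤ ((l.get i) : ℕ) ∧ ((l.get i) : ℕ) < a + b := by
    intro i
    simp only [hSBdef, hSNAdef, Finset.mem_filter, Finset.mem_univ, true_and]
    omega
  have hmemSI : ∀ i, i ∈ SI ↔ a + b ≤ ((l.get i) : ℕ) := by
    intro i
    simp only [hSIdef, hSNAdef, Finset.mem_filter, Finset.mem_univ, true_and]
    omega
  have hSA : SA.card ≤ a := by
    have hsub : SA.image (fun i => ((l.get i) : ℕ)) ⊆ Finset.range a := by
      intro x hx
      obtain ⟨i, hi, rfl⟩ := Finset.mem_image.mp hx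
      exact Finset.mem_range.mpr ((hmemSA i).mp hi)
    have hinj : Set.InjOn (fun i => ((l.get i) : ℕ)) SA := by
      intro i _ j _ h
      exact hget (Fin.val_injective h)
    calc SA.card = (SA.image (fun i => ((l.get i) : ℕ))).card :=
          (Finset.card_image_of_injOn hinj).symm
      _ ≤ (Finset.range a).card := Finset.card_le_card hsub
      _ = a := Finset.card_range a
  have hSB : SB.card ≤ b := by
    have hsub : SB.image (fun i => ((l.get i) : ℕ)) ⊆ Finset.Ico a (a + b) := by
      intro x hx
      obtain ⟨i, hi, rfl⟩ := Finset.mem_image.mp hx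
      exact Finset.mem_Ico.mpr ((hmemSB i).mp hi)
    have hinj : Set.InjOn (fun i => ((l.get i) : ℕ)) SB := by
      intro i _ j _ h
      exact hget (Fin.val_injective h)
    calc SB.card = (SB.image (fun i => ((l.get i) : ℕ))).card :=
          (Finset.card_image_of_injOn hinj).symm
      _ ≤ (Finset.Ico a (a + b)).card := Finset.card_le_card hsub
      _ = b := by rw [Nat.card_Ico]; omega
  set SI' : Finset (Fin len) := SI.filter (fun i => (i : ℕ) + 1 < len) with hSI'def
  set f : Fin len → Fin len :=
    fun i => if h : (i : ℕ) + 1 < len then ⟨(i : ℕ) + 1, h⟩ else i with hfdef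
  have hmaps : ∀ i ∈ SI', f i ∈ SA := by
    intro i hi
    obtain ⟨hiSI, hilt⟩ := Finset.mem_filter.mp hi
    have hIval : a + b ≤ ((l.get i) : ℕ) := (hmemSI i).mp hiSI
    have hAdj := hadj (i : ℕ) hilt
    have heta : (⟨(i : ℕ), by omega⟩ : Fin len) = i := by apply Fin.val_injective; rfl
    rw [heta] at hAdj
    obtain ⟨_, hd⟩ := hAdj
    have : ((l.get ⟨(i : ℕ) + 1, hilt⟩) : ℕ) < a := by
      rcases hd with h | h | ⟨h, _⟩ <;> omega
    rw [hfdef]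
    simp only [hilt, dif_pos]
    exact (hmemSA _).mpr this
  have hinjf : Set.InjOn f SI' := by
    intro i hi j hj h
    obtain ⟨_, hilt⟩ := Finset.mem_filter.mp hi
    obtain ⟨_, hjlt⟩ := Finset.mem_filter.mp hj
    rw [hfdef] at h
    simp only [hilt, hjlt, dif_pos] at h
    apply Fin.val_injective
    have := congrArg Fin.val h
    simpa using this
  have hI'A : SI'.card ≤ SA.card := Finset.card_le_card_of_injOn f hmaps hinjf
  have hsplit := Finset.card_filter_add_card_filter_not
    (s := SI) (p := fun (i : Fin len) => (i : ℕ) + 1 < len)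
  rw [← hSI'def] at hsplit
  have hneg1 : (SI.filter (fun (i : Fin len) => ¬ (i : ℕ) + 1 < len)).card ≤ 1 := by
    apply Finset.card_le_one.mpr
    intro x hx y hy
    obtain ⟨_, hx2⟩ := Finset.mem_filter.mp hx
    obtain ⟨_, hy2⟩ := Finset.mem_filter.mp hy
    apply Fin.val_injective
    have hxl := x.isLt
    have hyl := y.isLt
    omega
  by_cases hcase : SI.card ≤ SA.card
  · omega
  · have hSIeq : SI.card = SA.card + 1 := by
      have : SI'.card + (SI.filter (fun (i : Fin len) => ¬ (i : ℕ) + 1 < len)).card = SI.card := hsplit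
      omega
    have hnegpos : 0 < (SI.filter (fun (i : Fin len) => ¬ (i : ℕ) + 1 < len)).card := by omega
    obtain ⟨ilast, hilast⟩ := Finset.card_pos.mp hnegpos
    obtain ⟨hilastSI, hilastge⟩ := Finset.mem_filter.mp hilast
    have hilastval : (ilast : ℕ) = len - 1 := by
      have := ilast.isLt; omega
    have hSI'card : SI'.card = SA.card := by omega
    have himg : SI'.image f = SA := by
      apply Finset.eq_of_subset_of_card_le
      · intro x hx
        obtain ⟨i, hi, rfl⟩ := Finset.mem_image.mp hx
        exact hmaps i hi
      · rw [Finset.card_image_of_injOn hinjf, hSI'card]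
    have hSB0 : SB = ∅ := by
      by_contra hne
      have hne' : SB.Nonempty := Finset.nonempty_iff_ne_empty.mpr hne
      set j0 := SB.max' hne' with hj0def
      have hj0 := SB.max'_mem hne'
      have hj0B := (hmemSB j0).mp hj0
      have hj0ne : j0 ≠ ilast := by
        intro h
        have := (hmemSI ilast).mp hilastSI
        rw [h] at hj0B
        omega
      have hj0lt : (j0 : ℕ) + 1 < len := by
        have h1 := j0.isLt
        have : (j0 : ℕ) ≠ (ilast : ℕ) := fun h => hj0ne (Fin.val_injective h)
        omega
      have hAdj := hadj (j0 : ℕ) hj0lt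
      have heta : (⟨(j0 : ℕ), by omega⟩ : Fin len) = j0 := by apply Fin.val_injective; rfl
      rw [heta] at hAdj
      obtain ⟨_, hd⟩ := hAdj
      by_cases hA1 : ((l.get ⟨(j0 : ℕ) + 1, hj0lt⟩) : ℕ) < a
      · have hmem : (⟨(j0 : ℕ) + 1, hj0lt⟩ : Fin len) ∈ SA := (hmemSA _).mpr hA1
        rw [← himg] at hmem
        obtain ⟨i, hiSI', hfi⟩ := Finset.mem_image.mp hmem
        obtain ⟨hiSI, hilt⟩ := Finset.mem_filter.mp hiSI'
        rw [hfdef] at hfi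
        simp only [hilt, dif_pos] at hfi
        have hival : (i : ℕ) = (j0 : ℕ) := by
          have := congrArg Fin.val hfi
          simpa using this
        have : i = j0 := Fin.val_injective hival
        rw [this] at hiSI
        have := (hmemSI j0).mp hiSI
        omega
      · have hmem : (⟨(j0 : ℕ) + 1, hj0lt⟩ : Fin len) ∈ SB := by
          apply (hmemSB _).mpr
          constructor
          · omega
          · rcases hd with h | h | ⟨_, h⟩ <;> omega
        have hle := SB.le_max' _ hmem
        rw [← hj0def] at hle
        have : (j0 : ℕ) + 1 ≤ (j0 : ℕ) := hle
        omega
    have : SB.card = 0 := by rw [hSB0]; simp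
    omega

lemma witness_walk (n a b : ℕ) (ha : 1 ≤ a) (hn : a + b + a ≤ n) :
    ∃ (u v : Fin n) (w : (Snab n a b).Walk u v), w.IsPath ∧ w.length + 1 = 2 * a + b := by
  classical
  let F : Fin (2 * a + b) → Fin n :=
    fun i => ⟨gfun a b (i : ℕ), gfun_lt n a b hn (i : ℕ) i.isLt⟩
  have hFval : ∀ i, ((F i : Fin n) : ℕ) = gfun a b (i : ℕ) := fun i => rfl
  have hLlen : (List.ofFn F).length = 2 * a + b := List.length_ofFn (f := F)
  have hLnd : (List.ofFn F).Nodup := by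
    rw [List.nodup_ofFn]
    intro i j h
    apply Fin.val_injective
    exact gfun_inj a b i.isLt j.isLt (congrArg Fin.val h)
  have hLch : (List.ofFn F).Chain' (Snab n a b).Adj := by
    rw [List.Chain', List.isChain_iff_getElem]
    intro i h
    rw [hLlen] at h
    rw [List.getElem_ofFn, List.getElem_ofFn]
    constructor
    · intro hEq
      have h2 : gfun a b i = gfun a b (i + 1) := by
        have := congrArg Fin.val hEq
        simpa [hFval] using this
      have := gfun_inj a b (by omega) (by omega) h2
      omega
    · have := gfun_adj a b i (by omega)
      simpa [hFval] using this
  have hLne : (List.ofFn F) ≠ [] := by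
    intro h
    rw [h] at hLlen
    simp only [List.length_nil] at hLlen
    omega
  obtain ⟨u, v, w, hw⟩ := exists_walk (List.ofFn F) hLch hLne
  refine ⟨u, v, w, (SimpleGraph.Walk.isPath_def w).mpr (hw ▸ hLnd), ?_⟩
  have := w.length_support
  rw [hw, hLlen] at this
  omega

theorem longestPath_Snab (n a b : ℕ) (ha : 1 ≤ a) (hb : 1 ≤ b)
    (hn : a + b + a ≤ n) : longestPathVerts (Snab n a b) = 2 * a + b := by
  classical
  obtain ⟨u, v, w, hwpath, hwlen⟩ := witness_walk n a b ha hn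
  have hmem : 2 * a + b ∈
      {m | ∃ (u v : Fin n) (p : (Snab n a b).Walk u v), p.IsPath ∧ p.length + 1 = m} :=
    ⟨u, v, w, hwpath, hwlen⟩
  have hbound : ∀ m ∈
      {m | ∃ (u v : Fin n) (p : (Snab n a b).Walk u v), p.IsPath ∧ p.length + 1 = m},
      m ≤ 2 * a + b := by
    rintro m ⟨u, v, p, hp, hlen⟩
    have h1 := key_bound n a b hb p.support
      ((SimpleGraph.Walk.isPath_def p).mp hp) p.isChain_adj_support
    have h2 := p.length_support
    omega
  exact le_antisymm (csSup_le ⟨_, hmem⟩ hbound)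
    (le_csSup ⟨2 * a + b, fun m hm => hbound m hm⟩ hmem)
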